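/- Let $n \ge 2$ be an integer, let $p$ be a real number with $\frac{2n}{n+1} \le p \le \frac{4n-2}{n+1}$, and let $b, c$ be real numbers with $0 < b < c$. Then $Q(u) \ge 0$ for every $u \in (0, b)$. -/
import Mathlib


theorem Q_nonneg_on_Ioo (n : ℕ) (hn : 2 ≤ n) (p b c : ℝ)
    (hp1 : 2 * (n : ℝ) / ((n : ℝ) + 1) ≤ p) (hp2 : p ≤ (4 * (n : ℝ) - 2) / ((n : ℝ) + 1))
    (hb : 0 < b) (hbc : b < c) :
    ∀ u ∈ Set.Ioo (0 : ℝ) b,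
      (((n : ℝ) + 1) / ((n : ℝ) - 1) - 3 / (p - 1)) * u ^ 2
        - (b + c) * (((n : ℝ) + 1) / ((n : ℝ) - 1) - 2 / (p - 1)) * u
        + b * c * (((n : ℝ) + 1) / ((n : ℝ) - 1) - 1 / (p - 1)) ≥ 0 := by
  rintro u ⟨hu0, hub⟩
  have hn2 : (2:ℝ) ≤ (n:ℝ) := by exact_mod_cast hn
  have hn1 : (0:ℝ) < (n:ℝ) - 1 := by linarith
  have hn1' : (0:ℝ) < (n:ℝ) + 1 := by linarith
  have heq : 2 * (n : ℝ) / ((n : ℝ) + 1) - 1 = ((n:ℝ) - 1) / ((n:ℝ) + 1) := by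
    field_simp
    ring
  have hp1' : ((n:ℝ) - 1) / ((n:ℝ) + 1) ≤ p - 1 := by linarith
  have hpp : 0 < p - 1 := lt_of_lt_of_le (div_pos hn1 hn1') hp1'
  have hkey : (n:ℝ) - 1 ≤ ((n:ℝ) + 1) * (p - 1) := by
    have := (div_le_iff₀ hn1').mp hp1'
    linarith
  have hs : 1 / (p - 1) ≤ ((n:ℝ) + 1) / ((n:ℝ) - 1) := by
    rw [div_le_div_iff₀ hpp hn1]
    linarith
  have hid : (((n : ℝ) + 1) / ((n : ℝ) - 1) - 3 / (p - 1)) * u ^ 2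
        - (b + c) * (((n : ℝ) + 1) / ((n : ℝ) - 1) - 2 / (p - 1)) * u
        + b * c * (((n : ℝ) + 1) / ((n : ℝ) - 1) - 1 / (p - 1))
      = (((n : ℝ) + 1) / ((n : ℝ) - 1) - 1 / (p - 1)) * ((u - b) * (u - c))
        + (1 / (p - 1)) * (u * ((b + c) - 2 * u)) := by
    field_simp
    ring
  rw [hid]
  have h1 : 0 ≤ (((n : ℝ) + 1) / ((n : ℝ) - 1) - 1 / (p - 1)) := by linarith
  have h2 : 0 ≤ (u - b) * (u - c) := by nlinarith
  have h3 : 0 < 1 / (p - 1) := by positivity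
  have h4 : 0 ≤ u * ((b + c) - 2 * u) := by nlinarith
  positivity
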